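/- If a matching M is popular, then G_M contains no M-alternating path that contains a (+,+) edge and has an M-unmatched vertex as an endpoint. -/

import Mathlib

/-- A roommates instance: a simple graph together with, for each vertex,
a ranking of vertices (lower rank = more preferred), injective on neighbors. -/
structure Roommates (V : Type*) where
  G : SimpleGraph V
  rank : V → V → ℕ
  rank_inj : ∀ u a b, G.Adj u a → G.Adj u b → rank u a = rank u b → a = b

variable {V : Type*}

/-- `M` encodes a matching: `M u = some v` means `u` is matched to `v`. -/
def IsMatching (R : Roommates V) (M : V → Option V) : Prop :=
  ∀ u v, M u = some v → R.G.Adj u v ∧ M v = some u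

/-- Vertex `v` prefers matching `M` to matching `M'`. -/
def Prefers (R : Roommates V) (M M' : V → Option V) (v : V) : Prop :=
  (∃ w, M v = some w ∧ M' v = none) ∨
  (∃ w w', M v = some w ∧ M' v = some w' ∧ R.rank v w < R.rank v w')

/-- `M` is popular: it never loses a head-to-head election. -/
def Popular [Fintype V] (R : Roommates V) (M : V → Option V) : Prop :=
  ∀ M', IsMatching R M' →
    {v | Prefers R M' M v}.ncard ≤ {v | Prefers R M M' v}.ncard

/-- Edge `(u,v)` blocks `M`: each endpoint is unmatched or prefers the other
endpoint to its partner. -/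
def Blocks (R : Roommates V) (M : V → Option V) (u v : V) : Prop :=
  R.G.Adj u v ∧ M u ≠ some v ∧
  (∀ w, M u = some w → R.rank u v < R.rank u w) ∧
  (∀ w, M v = some w → R.rank v u < R.rank v w)

def IsStable (R : Roommates V) (M : V → Option V) : Prop :=
  ∀ u v, ¬ Blocks R M u v

/-- `u` votes `+` for `v` against its situation in `M`
(true when `u` is unmatched or prefers `v` to its `M`-partner). -/
def VotePlus (R : Roommates V) (M : V → Option V) (u v : V) : Prop :=
  ∀ w, M u = some w → R.rank u v < R.rank u w

/-- Non-matching edge of `G_M`, i.e. not labeled `(−,−)`. -/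
def NonMatchEdge (R : Roommates V) (M : V → Option V) (u v : V) : Prop :=
  R.G.Adj u v ∧ M u ≠ some v ∧ (VotePlus R M u v ∨ VotePlus R M v u)

/-- `AltList A M b l`: the list of vertices `l` forms an alternating sequence,
whose first edge is a matching edge if `b = true` and an allowed (`A`)
non-matching edge if `b = false`. -/
def AltList (A : V → V → Prop) (M : V → Option V) : Bool → List V → Prop
  | _, [] => True
  | _, [_] => True
  | true, u :: v :: rest => M u = some v ∧ AltList A M false (v :: rest)
  | false, u :: v :: rest => A u v ∧ AltList A M true (v :: rest)

/-- A matching of the subgraph induced on `W`. -/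
def IsMatchingOn (R : Roommates V) (W : Set V) (M : V → Option V) : Prop :=
  IsMatching R M ∧ ∀ u v, M u = some v → u ∈ W ∧ v ∈ W

/-- Popularity within the subgraph induced on `W`. -/
def PopularOn (R : Roommates V) (W : Set V) (M : V → Option V) : Prop :=
  ∀ M', IsMatchingOn R W M' →
    {v | v ∈ W ∧ Prefers R M' M v}.ncard ≤ {v | v ∈ W ∧ Prefers R M M' v}.ncard

/-- Stability within the subgraph induced on `W`. -/
def StableOn (R : Roommates V) (W : Set V) (M : V → Option V) : Prop :=
  ∀ u v, u ∈ W → v ∈ W → ¬ Blocks R M u v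

namespace RMaux
open Classical
variable {V : Type*}

def flat (L : List (V × V)) : List V := L.flatMap (fun p => [p.1, p.2])

@[simp] lemma flat_nil : flat ([] : List (V × V)) = [] := rfl

@[simp] lemma flat_cons (p : V × V) (L : List (V × V)) :
    flat (p :: L) = p.1 :: p.2 :: flat L := rfl

lemma flat_append (L1 L2 : List (V × V)) : flat (L1 ++ L2) = flat L1 ++ flat L2 := by
  simp [flat]

lemma mem_flat {u : V} {L : List (V × V)} :
    u ∈ flat L ↔ ∃ p ∈ L, u = p.1 ∨ u = p.2 := by
  simp only [flat, List.mem_flatMap, List.mem_cons]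
  aesop

noncomputable def pairUp : List (V × V) → V → Option V
  | [], _ => none
  | p :: L, u => if u = p.1 then some p.2 else if u = p.2 then some p.1 else pairUp L u

lemma pairUp_cons (a b u : V) (L : List (V × V)) :
    pairUp ((a, b) :: L) u =
      if u = a then some b else if u = b then some a else pairUp L u := rfl

lemma pairUp_eq_none_iff (L : List (V × V)) (u : V) :
    pairUp L u = none ↔ u ∉ flat L := by
  induction L with
  | nil => simp [pairUp]
  | cons p L ih =>
    obtain ⟨a, b⟩ := p
    rw [pairUp_cons]
    by_cases h1 : u = a
    · simp [h1]
    · by_cases h2 : u = b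
      · have h3 : b ≠ a := fun e => h1 (h2.trans e)
        simp [h1, h2, h3]
      · simp [h1, h2, ih]

lemma pairUp_mem {L : List (V × V)} {u w : V} (h : pairUp L u = some w) :
    (u, w) ∈ L ∨ (w, u) ∈ L := by
  induction L with
  | nil => simp [pairUp] at h
  | cons p L ih =>
    obtain ⟨a, b⟩ := p
    rw [pairUp_cons] at h
    by_cases h1 : u = a
    · simp [h1] at h
      left; simp [h1, ← h]
    · by_cases h2 : u = b
      · have h3 : b ≠ a := fun e => h1 (h2.trans e)
        simp [h1, h2, h3] at h
        right; simp [h2, ← h]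
      · simp [h1, h2] at h
        rcases ih h with h | h
        · exact Or.inl (List.mem_cons_of_mem _ h)
        · exact Or.inr (List.mem_cons_of_mem _ h)

lemma mem_flat_of_mem {L : List (V × V)} {p : V × V} (hp : p ∈ L) :
    p.1 ∈ flat L ∧ p.2 ∈ flat L :=
  ⟨mem_flat.2 ⟨p, hp, Or.inl rfl⟩, mem_flat.2 ⟨p, hp, Or.inr rfl⟩⟩

lemma pairUp_fst {L : List (V × V)} (hnd : (flat L).Nodup) {a b : V} (hab : (a, b) ∈ L) :
    pairUp L a = some b := by
  induction L with
  | nil => simp at hab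
  | cons p L ih =>
    obtain ⟨c, d⟩ := p
    simp only [flat_cons, List.nodup_cons] at hnd
    rw [pairUp_cons]
    rcases List.mem_cons.1 hab with h | h
    · obtain ⟨rfl, rfl⟩ := Prod.mk.injEq .. ▸ h
      simp
    · have ha : a ∈ flat L := (mem_flat_of_mem h).1
      have h1 : a ≠ c := by rintro rfl; exact hnd.1 (by simp [ha])
      have h2 : a ≠ d := by rintro rfl; exact hnd.2.1 ha
      simp only [h1, h2, if_false]
      exact ih hnd.2.2 h

lemma pairUp_snd {L : List (V × V)} (hnd : (flat L).Nodup) {a b : V} (hab : (a, b) ∈ L) :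
    pairUp L b = some a := by
  induction L with
  | nil => simp at hab
  | cons p L ih =>
    obtain ⟨c, d⟩ := p
    simp only [flat_cons, List.nodup_cons] at hnd
    rw [pairUp_cons]
    rcases List.mem_cons.1 hab with h | h
    · obtain ⟨rfl, rfl⟩ := Prod.mk.injEq .. ▸ h
      have : b ≠ a := by rintro rfl; exact hnd.1 (by simp)
      simp [this]
    · have hb : b ∈ flat L := (mem_flat_of_mem h).2
      have h1 : b ≠ c := by rintro rfl; exact hnd.1 (by simp [hb])
      have h2 : b ≠ d := by rintro rfl; exact hnd.2.1 hb
      simp only [h1, h2, if_false]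
      exact ih hnd.2.2 h

lemma pairUp_symm {L : List (V × V)} (hnd : (flat L).Nodup) {u w : V}
    (h : pairUp L u = some w) : pairUp L w = some u := by
  rcases pairUp_mem h with h' | h'
  · exact pairUp_snd hnd h'
  · exact pairUp_fst hnd h'

noncomputable def newM (L : List (V × V)) (M : V → Option V) (u : V) : Option V :=
  match pairUp L u with
  | some w => some w
  | none =>
    match M u with
    | some z =>
      match pairUp L z with
      | none => some z
      | some _ => none
    | none => none

lemma newM_pair {L : List (V × V)} {M : V → Option V} {u w : V}
    (h : pairUp L u = some w) : newM L M u = some w := by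
  simp [newM, h]

end RMaux

section Matching
variable {V : Type*}

lemma mem_of_getLast?' {L : List (V × V)} {p : V × V} (h : L.getLast? = some p) : p ∈ L := by
  rw [List.getLast?_eq_getElem?] at h
  rcases List.getElem?_eq_some_iff.1 h with ⟨hlt, he⟩
  exact he ▸ List.getElem_mem hlt

lemma newM_isMatching {R : Roommates V} {M : V → Option V} (hM : IsMatching R M)
    {L : List (V × V)} (hnd : (RMaux.flat L).Nodup)
    (hedges : ∀ p ∈ L, NonMatchEdge R M p.1 p.2) :
    IsMatching R (RMaux.newM L M) := by
  intro u v huv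
  rcases hu : RMaux.pairUp L u with _ | w
  · simp only [RMaux.newM, hu] at huv
    rcases hz : M u with _ | z
    · simp [hz] at huv
    · rcases hz2 : RMaux.pairUp L z with _ | w'
      · simp only [hz, hz2, Option.some.injEq] at huv
        subst huv
        refine ⟨(hM u z hz).1, ?_⟩
        simp [RMaux.newM, hz2, (hM u z hz).2, hu]
      · simp [hz, hz2] at huv
  · have hv : w = v := by simpa [RMaux.newM, hu] using huv
    subst hv
    constructor
    · rcases RMaux.pairUp_mem hu with h | h
      · exact (hedges _ h).1
      · exact ((hedges _ h).1).symm
    · exact RMaux.newM_pair (RMaux.pairUp_symm hnd hu)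

lemma prefers_asymm {R : Roommates V} {M1 M2 : V → Option V} {q : V}
    (h1 : Prefers R M1 M2 q) (h2 : Prefers R M2 M1 q) : False := by
  rcases h1 with ⟨w, hw, hnone⟩ | ⟨w, w', hw, hw', hr⟩ <;>
    rcases h2 with ⟨z, hz, hznone⟩ | ⟨z, z', hz, hz', hr'⟩ <;>
    simp_all <;> omega

lemma mem_P {R : Roommates V} {M : V → Option V} {L : List (V × V)} {q w : V}
    (h : RMaux.pairUp L q = some w) (hv : VotePlus R M q w) :
    Prefers R (RMaux.newM L M) M q := by
  rcases hz : M q with _ | z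
  · exact Or.inl ⟨w, RMaux.newM_pair h, hz⟩
  · exact Or.inr ⟨w, z, RMaux.newM_pair h, hz, hv z hz⟩

lemma mem_Q_cases {R : Roommates V} {M : V → Option V} {L : List (V × V)} {q : V}
    (hq : Prefers R M (RMaux.newM L M) q)
    (hnone : RMaux.pairUp L q = none) : ∃ w, M q = some w ∧ w ∈ RMaux.flat L := by
  rcases hq with ⟨w, hw, hnone'⟩ | ⟨w, w', hw, hw', hr⟩
  · refine ⟨w, hw, ?_⟩
    by_contra hwf
    have h2 : RMaux.pairUp L w = none := (RMaux.pairUp_eq_none_iff _ _).2 hwf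
    simp [RMaux.newM, hnone, hw, h2] at hnone'
  · exfalso
    rcases h2 : RMaux.pairUp L w with _ | z
    · simp only [RMaux.newM, hnone, hw, h2, Option.some.injEq] at hw'
      subst hw'
      exact lt_irrefl _ hr
    · simp [RMaux.newM, hnone, hw, h2] at hw'

lemma endpoint_partner {R : Roommates V} {M : V → Option V} (hM : IsMatching R M)
    {L : List (V × V)}
    (hchain : List.Chain' (fun p q => M p.2 = some q.1) L)
    {w q : V} (hw : w ∈ RMaux.flat L) (hq : M w = some q) (hqf : q ∉ RMaux.flat L) :
    (∃ p, L.head? = some p ∧ w = p.1) ∨ (∃ p, L.getLast? = some p ∧ w = p.2) := by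
  rw [RMaux.mem_flat] at hw
  obtain ⟨p, hpL, hw⟩ := hw
  obtain ⟨⟨i, hi⟩, hget⟩ := List.get_of_mem hpL
  rcases hw with hw | hw
  · rcases Nat.eq_zero_or_pos i with h0 | h0
    · left
      refine ⟨p, ?_, hw⟩
      subst h0
      rw [List.head?_eq_getElem?, List.getElem?_eq_getElem hi]
      exact congrArg some hget
    · exfalso
      have hc := List.isChain_iff_getElem.1 hchain (i - 1) (by omega)
      have hi1 : i - 1 + 1 = i := by omega
      simp only [hi1] at hc
      rw [show L[i] = p from hget] at hc
      rw [← hw] at hc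
      have h3 := (hM _ _ hc).2
      rw [hq] at h3
      apply hqf
      rw [RMaux.mem_flat]
      exact ⟨_, List.get_mem L ⟨i - 1, by omega⟩, Or.inr (Option.some.inj h3)⟩
  · by_cases hlast : i = L.length - 1
    · right
      subst hlast
      refine ⟨p, ?_, hw⟩
      rw [List.getLast?_eq_getElem?, List.getElem?_eq_getElem (by omega)]
      exact congrArg some hget
    · exfalso
      have hc := List.isChain_iff_getElem.1 hchain i (by omega)
      rw [show L[i] = p from hget, ← hw, hq] at hc
      apply hqf
      rw [RMaux.mem_flat]
      exact ⟨_, List.get_mem L ⟨i + 1, by omega⟩, Or.inl (Option.some.inj hc)⟩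

end Matching

section Core
variable {V : Type*}

lemma core_lemma [Fintype V] {R : Roommates V} {M : V → Option V} (hM : IsMatching R M)
    (hpop : Popular R M) {L : List (V × V)}
    (hedges : ∀ p ∈ L, NonMatchEdge R M p.1 p.2)
    (hchain : List.Chain' (fun p q => M p.2 = some q.1) L)
    (hnd : (RMaux.flat L).Nodup)
    {a0 b0 : V} (hhead : L.head? = some (a0, b0)) (h0 : M a0 = none)
    {x y : V} (hlast : L.getLast? = some (x, y)) (hxy : Blocks R M x y) :
    False := by
  classical
  set M' := RMaux.newM L M with hM'def
  have hM' : IsMatching R M' := newM_isMatching hM hnd hedges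
  set P := {v | Prefers R M' M v} with hPdef
  set Q := {v | Prefers R M M' v} with hQdef
  have hPQ : ∀ q, q ∈ Q → q ∉ P := fun q hq hp => prefers_asymm hp hq
  have hxyL : (x, y) ∈ L := mem_of_getLast?' hlast
  have hpx : RMaux.pairUp L x = some y := RMaux.pairUp_fst hnd hxyL
  have hpy : RMaux.pairUp L y = some x := RMaux.pairUp_snd hnd hxyL
  have hxP : x ∈ P := mem_P hpx hxy.2.2.1
  have hyP : y ∈ P := mem_P hpy hxy.2.2.2
  set f : V → V := fun q => match RMaux.pairUp L q with | some w => w | none => x with hf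
  have hfon : ∀ q w, RMaux.pairUp L q = some w → f q = w := by
    intro q w h; simp only [hf, h]
  have hfoff : ∀ q, RMaux.pairUp L q = none → f q = x := by
    intro q h; simp only [hf, h]
  have hoffy : ∀ q ∈ Q, RMaux.pairUp L q = none → M q = some y := by
    intro q hq hqn
    obtain ⟨w, hw, hwf⟩ := mem_Q_cases hq hqn
    have hqnf : q ∉ RMaux.flat L := (RMaux.pairUp_eq_none_iff _ _).1 hqn
    rcases endpoint_partner hM hchain hwf (hM _ _ hw).2 hqnf with ⟨p, hp, he⟩ | ⟨p, hp, he⟩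
    · rw [hhead] at hp
      obtain rfl := Option.some.inj hp
      rw [he] at hw
      exact absurd ((hM _ _ hw).2 ▸ h0) (by simp [(hM _ _ hw).2])
    · rw [hlast] at hp
      obtain rfl := Option.some.inj hp
      rw [he] at hw
      exact hw
  have hQmaps : ∀ q ∈ Q, f q ∈ P ∧ f q ≠ y := by
    intro q hq
    rcases hu : RMaux.pairUp L q with _ | w
    · rw [hfoff q hu]
      exact ⟨hxP, hxy.1.ne⟩
    · rw [hfon q w hu]
      have hvote : VotePlus R M q w ∨ VotePlus R M w q := by
        rcases RMaux.pairUp_mem hu with h | h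
        · exact (hedges _ h).2.2
        · exact ((hedges _ h).2.2).symm
      rcases hvote with hv | hv
      · exact absurd (mem_P hu hv) (hPQ q hq)
      · refine ⟨mem_P (RMaux.pairUp_symm hnd hu) hv, ?_⟩
        rintro rfl
        have h2 := RMaux.pairUp_symm hnd hu
        rw [hpy] at h2
        obtain rfl := Option.some.inj h2
        exact hPQ _ hq hxP
  have hinj : Set.InjOn f Q := by
    intro q1 hq1 q2 hq2 hfe
    rcases h1 : RMaux.pairUp L q1 with _ | w1 <;> rcases h2 : RMaux.pairUp L q2 with _ | w2
    · have e1 := hoffy q1 hq1 h1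
      have e2 := hoffy q2 hq2 h2
      have := (hM _ _ e1).2
      rw [(hM _ _ e2).2] at this
      exact (Option.some.inj this).symm
    · exfalso
      rw [hfoff q1 h1, hfon q2 w2 h2] at hfe
      rw [← hfe] at h2
      have h3 := RMaux.pairUp_symm hnd h2
      rw [hpx] at h3
      obtain rfl := Option.some.inj h3
      exact hPQ _ hq2 hyP
    · exfalso
      rw [hfoff q2 h2, hfon q1 w1 h1] at hfe
      rw [hfe] at h1
      have h3 := RMaux.pairUp_symm hnd h1
      rw [hpx] at h3
      obtain rfl := Option.some.inj h3
      exact hPQ _ hq1 hyP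
    · rw [hfon q1 w1 h1, hfon q2 w2 h2] at hfe
      subst hfe
      have e1 := RMaux.pairUp_symm hnd h1
      rw [RMaux.pairUp_symm hnd h2] at e1
      exact (Option.some.inj e1).symm
  have hsub : ∀ q ∈ Q, f q ∈ P \ {y} := fun q hq =>
    ⟨(hQmaps q hq).1, (hQmaps q hq).2⟩
  have hle : Q.ncard ≤ (P \ {y}).ncard :=
    Set.ncard_le_ncard_of_injOn f hsub hinj (Set.toFinite _)
  have hlt : (P \ {y}).ncard < P.ncard :=
    Set.ncard_diff_singleton_lt_of_mem hyP (Set.toFinite _)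
  have hge := hpop M' hM'
  rw [← hPdef, ← hQdef] at hge
  omega

end Core

section Alt
variable {V : Type*} {A : V → V → Prop} {M : V → Option V}

lemma altList_nil {b : Bool} : AltList A M b [] := by cases b <;> trivial

lemma altList_single {b : Bool} {u : V} : AltList A M b [u] := by cases b <;> trivial

lemma altList_prefix : ∀ (l1 l2 : List V) (b : Bool),
    AltList A M b (l1 ++ l2) → AltList A M b l1 := by
  intro l1
  induction l1 with
  | nil => intro l2 b _; exact altList_nil
  | cons u l1' ih =>
    intro l2 b h
    cases l1' with
    | nil => exact altList_single
    | cons v rest =>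
      cases b
      · obtain ⟨h1, h2⟩ := h
        exact ⟨h1, ih l2 true h2⟩
      · obtain ⟨h1, h2⟩ := h
        exact ⟨h1, ih l2 false h2⟩

lemma altList_suffix : ∀ (l1 l2 : List V) (b : Bool),
    AltList A M b (l1 ++ l2) → ∃ b', AltList A M b' l2 := by
  intro l1
  induction l1 with
  | nil => exact fun l2 b h => ⟨b, h⟩
  | cons u l1' ih =>
    intro l2 b h
    cases l1' with
    | nil =>
      cases l2 with
      | nil => exact ⟨b, altList_nil⟩
      | cons w rest =>
        cases b
        · obtain ⟨_, h2⟩ := h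
          exact ⟨true, h2⟩
        · obtain ⟨_, h2⟩ := h
          exact ⟨false, h2⟩
    | cons v rest =>
      cases b
      · obtain ⟨_, h2⟩ := h
        exact ih l2 true h2
      · obtain ⟨_, h2⟩ := h
        exact ih l2 false h2

lemma head_fst_of_flat {L : List (V × V)} {w : V} {r : List V}
    (h : w :: r = RMaux.flat L) {q : V × V} (hq : L.head? = some q) : q.1 = w := by
  cases L with
  | nil => simp at h
  | cons p L' =>
    obtain rfl : p = q := Option.some.inj hq
    rw [RMaux.flat_cons] at h
    exact (List.cons.injEq .. ▸ h).1.symm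

lemma exists_pairs : ∀ l : List V, AltList A M false l →
    (∃ L : List (V × V), l = RMaux.flat L ∧ (∀ p ∈ L, A p.1 p.2) ∧
        List.Chain' (fun p q => M p.2 = some q.1) L) ∨
    (∃ (L : List (V × V)) (c : V), l = RMaux.flat L ++ [c] ∧ (∀ p ∈ L, A p.1 p.2) ∧
        List.Chain' (fun p q => M p.2 = some q.1) L ∧
        ∀ p, L.getLast? = some p → M p.2 = some c) := by
  have key : ∀ (n : ℕ) (l : List V), l.length ≤ n → AltList A M false l →
      (∃ L : List (V × V), l = RMaux.flat L ∧ (∀ p ∈ L, A p.1 p.2) ∧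
          List.Chain' (fun p q => M p.2 = some q.1) L) ∨
      (∃ (L : List (V × V)) (c : V), l = RMaux.flat L ++ [c] ∧ (∀ p ∈ L, A p.1 p.2) ∧
          List.Chain' (fun p q => M p.2 = some q.1) L ∧
          ∀ p, L.getLast? = some p → M p.2 = some c) := by
    intro n
    induction n with
    | zero =>
      intro l hl _
      have : l = [] := List.eq_nil_of_length_eq_zero (Nat.le_zero.1 hl)
      subst this
      exact Or.inl ⟨[], rfl, by simp, by simp [List.Chain']⟩
    | succ n ih =>
      intro l hl halt
      rcases l with _ | ⟨u, _ | ⟨v, rest⟩⟩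
      · exact Or.inl ⟨[], rfl, by simp, by simp [List.Chain']⟩
      · exact Or.inr ⟨[], u, rfl, by simp, by simp [List.Chain'], by simp⟩
      · obtain ⟨huv, h2⟩ := halt
        cases rest with
        | nil =>
          refine Or.inl ⟨[(u, v)], rfl, ?_, by simp [List.Chain']⟩
          intro p hp
          obtain rfl : p = (u, v) := by simpa using hp
          exact huv
        | cons w rest' =>
          obtain ⟨hvw, h3⟩ := h2
          have hlen : (w :: rest').length ≤ n := by
            simp only [List.length_cons] at hl ⊢; omega
          rcases ih (w :: rest') hlen h3 with ⟨L, hflat, hA, hch⟩ | ⟨L, c, hflat, hA, hch, hc⟩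
          · left
            refine ⟨(u, v) :: L, ?_, ?_, ?_⟩
            · rw [RMaux.flat_cons, ← hflat]
            · intro p hp
              rcases List.mem_cons.1 hp with rfl | hp
              · exact huv
              · exact hA p hp
            · show List.IsChain _ _; rw [List.isChain_cons]
              refine ⟨?_, hch⟩
              intro q hq
              have : q.1 = w := head_fst_of_flat hflat hq
              rw [this]
              exact hvw
          · right
            refine ⟨(u, v) :: L, c, ?_, ?_, ?_, ?_⟩
            · rw [RMaux.flat_cons, List.cons_append, List.cons_append, ← hflat]
            · intro p hp
              rcases List.mem_cons.1 hp with rfl | hp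
              · exact huv
              · exact hA p hp
            · show List.IsChain _ _; rw [List.isChain_cons]
              refine ⟨?_, hch⟩
              intro q hq
              cases L with
              | nil => simp at hq
              | cons p0 L' =>
                obtain rfl : p0 = q := Option.some.inj hq
                rw [RMaux.flat_cons] at hflat
                have : p0.1 = w := by
                  have := (List.cons.injEq .. ▸ hflat).1
                  exact this.symm
                rw [this]
                exact hvw
            · intro p hp
              cases L with
              | nil =>
                obtain rfl : (u, v) = p := Option.some.inj hp
                simp only [RMaux.flat_nil, List.nil_append] at hflat
                obtain ⟨rfl, -⟩ := (List.cons.injEq .. ▸ hflat)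
                exact hvw
              | cons p0 L' =>
                rw [List.getLast?_cons_cons] at hp
                exact hc p hp
  exact fun l => key l.length l le_rfl

lemma concat_inj' {α : Type*} {a1 a2 : List α} {e1 e2 : α}
    (h : a1 ++ [e1] = a2 ++ [e2]) : a1 = a2 ∧ e1 = e2 := by
  constructor
  · have := congrArg List.dropLast h
    simpa [List.dropLast_concat] using this
  · have := congrArg List.getLast? h
    simpa [List.getLast?_concat] using this

lemma flat_swap_reverse : ∀ L : List (V × V),
    RMaux.flat ((L.map Prod.swap).reverse) = (RMaux.flat L).reverse := by
  intro L
  induction L with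
  | nil => rfl
  | cons p L ih =>
    rw [List.map_cons, List.reverse_cons, RMaux.flat_append, ih, RMaux.flat_cons]
    simp [RMaux.flat]

lemma nonMatchEdge_symm {R : Roommates V} (hM : IsMatching R M) {a b : V}
    (h : NonMatchEdge R M a b) : NonMatchEdge R M b a := by
  refine ⟨h.1.symm, ?_, h.2.2.symm⟩
  intro hba
  exact h.2.1 ((hM _ _ hba).2)

lemma blocks_symm {R : Roommates V} (hM : IsMatching R M) {a b : V}
    (h : Blocks R M a b) : Blocks R M b a :=
  ⟨h.1.symm, fun hba => h.2.1 ((hM _ _ hba).2), h.2.2.2, h.2.2.1⟩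

end Alt

theorem popular_no_alt_path_blocking_unmatched_end {V : Type*} [Fintype V]
    (R : Roommates V) (M : V → Option V) (hM : IsMatching R M) (hpop : Popular R M)
    (l : List V) (b : Bool) (hnd : l.Nodup)
    (halt : AltList (NonMatchEdge R M) M b l)
    (x y : V) (hinfix : [x, y] <:+: l) (hblock : Blocks R M x y)
    (v : V) (hend : l.head? = some v ∨ l.getLast? = some v) (hunm : M v = none) :
    False := by
  classical
  obtain ⟨s, t, hl⟩ := hinfix
  rcases hend with hend | hend
  · -- v is the head of l
    have halt1 : AltList (NonMatchEdge R M) M b (s ++ [x, y]) :=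
      altList_prefix _ t b (by rw [hl]; exact halt)
    have hne : s ++ [x, y] ≠ [] := by simp
    have hh1 : (s ++ [x, y]).head? = some v := by
      rw [← hend, ← hl, List.head?_append_of_ne_nil _ hne]
    obtain ⟨w0, r0, hshape⟩ : ∃ w0 r0, s ++ [x, y] = v :: w0 :: r0 := by
      rcases s with _ | ⟨a, s'⟩
      · simp only [List.nil_append, List.head?_cons, Option.some.injEq] at hh1
        exact ⟨y, [], by rw [hh1]; rfl⟩
      · simp only [List.cons_append, List.head?_cons, Option.some.injEq] at hh1
        rcases s' with _ | ⟨a2, s''⟩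
        · exact ⟨x, [y], by rw [hh1]; rfl⟩
        · exact ⟨a2, s'' ++ [x, y], by rw [hh1]; rfl⟩
    have hb : b = false := by
      cases b
      · rfl
      · exfalso
        rw [hshape] at halt1
        obtain ⟨h1, -⟩ := halt1
        rw [hunm] at h1
        cases h1
    subst hb
    have hndl1 : (s ++ [x, y]).Nodup :=
      List.Nodup.sublist (by rw [← hl]; exact List.sublist_append_left _ t) hnd
    rcases exists_pairs _ halt1 with ⟨L, hflat, hA, hch⟩ | ⟨L, c, hflat, hA, hch, hc⟩
    · have hndL : (RMaux.flat L).Nodup := by rw [← hflat]; exact hndl1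
      obtain hLnil | ⟨L', p, hLc⟩ := List.eq_nil_or_concat L
      · rw [hLnil] at hflat; simp at hflat
      · rw [List.concat_eq_append] at hLc
        have h1 : (s ++ [x]) ++ [y] = (RMaux.flat L' ++ [p.1]) ++ [p.2] := by
          rw [hLc, RMaux.flat_append] at hflat
          simpa [List.append_assoc] using hflat
        obtain ⟨h2, hy⟩ := concat_inj' h1
        obtain ⟨-, hx⟩ := concat_inj' h2
        have hlastL : L.getLast? = some (x, y) := by
          rw [hLc, List.getLast?_concat, hx, hy]
        obtain ⟨p0, L'', hL0⟩ : ∃ p0 L'', L = p0 :: L'' := by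
          cases L with
          | nil => simp at hLc
          | cons a L2 => exact ⟨a, L2, rfl⟩
        have hheadL : L.head? = some p0 := by rw [hL0]; rfl
        have h0 : M p0.1 = none := by
          have hft : v :: w0 :: r0 = RMaux.flat L := by rw [← hshape]; exact hflat
          have := head_fst_of_flat hft hheadL
          rw [this]; exact hunm
        exact core_lemma hM hpop hA hch hndL hheadL h0 hlastL hblock
    · have h1 : (s ++ [x]) ++ [y] = RMaux.flat L ++ [c] := by
        simpa [List.append_assoc] using hflat
      obtain ⟨h2, hy⟩ := concat_inj' h1
      obtain hLnil | ⟨L', p, hLc⟩ := List.eq_nil_or_concat L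
      · rw [hLnil] at h2; simp at h2
      · rw [List.concat_eq_append] at hLc
        have h3 : s ++ [x] = (RMaux.flat L' ++ [p.1]) ++ [p.2] := by
          rw [h2, hLc, RMaux.flat_append]
          simp [RMaux.flat, List.append_assoc]
        obtain ⟨-, hx⟩ := concat_inj' h3
        have hlastL : L.getLast? = some p := by
          rw [hLc]; exact List.getLast?_concat
        have hMx := hc p hlastL
        rw [← hx, ← hy] at hMx
        exact hblock.2.1 hMx
  · -- v is the last vertex of l
    have hl' : l = s ++ (x :: y :: t) := by rw [← hl]; simp
    obtain ⟨b', halt2⟩ := altList_suffix s (x :: y :: t) b (by rw [← hl']; exact halt)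
    have hb : b' = false := by
      cases b'
      · rfl
      · obtain ⟨h1, -⟩ := halt2
        exact absurd h1 hblock.2.1
    subst hb
    have hndl2 : (x :: y :: t).Nodup :=
      List.Nodup.sublist (by rw [hl']; exact List.sublist_append_right s _) hnd
    have hlast2 : (x :: y :: t).getLast? = some v := by
      rw [← hend, hl', List.getLast?_append_of_ne_nil _ (by simp)]
    rcases exists_pairs _ halt2 with ⟨L, hflat, hA, hch⟩ | ⟨L, c, hflat, hA, hch, hc⟩
    · obtain ⟨p0, L'', rfl⟩ : ∃ p0 L'', L = p0 :: L'' := by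
        cases L with
        | nil => simp at hflat
        | cons a L2 => exact ⟨a, L2, rfl⟩
      have hcons := hflat
      rw [RMaux.flat_cons] at hcons
      injection hcons with e1 hcons
      injection hcons with e2 e3
      obtain hLnil | ⟨L', p, hLc⟩ := List.eq_nil_or_concat (p0 :: L'')
      · simp at hLnil
      · rw [List.concat_eq_append] at hLc
        have efl : RMaux.flat (p0 :: L'') = (RMaux.flat L' ++ [p.1]) ++ [p.2] := by
          rw [hLc, RMaux.flat_append]
          simp [RMaux.flat, List.append_assoc]
        have e4 : some v = some p.2 := by
          rw [← hlast2, hflat, efl, List.getLast?_concat]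
        have hMv : M p.2 = none := by rw [← Option.some.inj e4]; exact hunm
        set Lr := ((p0 :: L'').map Prod.swap).reverse with hLr
        have hedgesr : ∀ q ∈ Lr, NonMatchEdge R M q.1 q.2 := by
          intro q hq
          rw [hLr, List.mem_reverse, List.mem_map] at hq
          obtain ⟨p', hp', rfl⟩ := hq
          exact nonMatchEdge_symm hM (hA p' hp')
        have hchainr : List.Chain' (fun p q => M p.2 = some q.1) Lr := by
          rw [hLr]; show List.IsChain _ _; rw [List.isChain_reverse, List.isChain_map]
          refine List.IsChain.imp ?_ hch
          intro a b hab
          exact (hM _ _ hab).2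
        have hndr : (RMaux.flat Lr).Nodup := by
          rw [hLr, flat_swap_reverse, List.nodup_reverse, ← hflat]
          exact hndl2
        have hheadr : Lr.head? = some (p.2, p.1) := by
          rw [hLr, List.head?_reverse, hLc, List.getLast?_map, List.getLast?_concat]
          rfl
        have hlastr : Lr.getLast? = some (p0.2, p0.1) := by
          rw [hLr, List.getLast?_reverse, List.head?_map]
          rfl
        have hblockr : Blocks R M p0.2 p0.1 := by
          rw [← e2, ← e1]
          exact blocks_symm hM hblock
        exact core_lemma hM hpop hedgesr hchainr hndr hheadr hMv hlastr hblockr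
    · have hc' : (x :: y :: t).getLast? = some c := by
        rw [hflat, List.getLast?_concat]
      have hcv : c = v := by
        rw [hlast2] at hc'
        exact (Option.some.inj hc').symm
      obtain hLnil | ⟨L', p, hLc⟩ := List.eq_nil_or_concat L
      · rw [hLnil] at hflat; simp at hflat
      · rw [List.concat_eq_append] at hLc
        have hMp := hc p (by rw [hLc]; exact List.getLast?_concat)
        rw [hcv] at hMp
        have hfin := (hM _ _ hMp).2
        rw [hunm] at hfin
        cases hfin
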